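/- Let d be a positive integer, let (M, dist) be a metric space equipped with a Borel measure m such that m(M) < ∞ and m(B(x,r)) ≤ C_v·r^d for all x ∈ M and r > 0, let c > 0 and 0 < α < d/2. Then there exists a constant C > 0 such that for all t > 0 and all x, x' ∈ M, ∫_M t^(−d/2)·exp(−dist(x,y)²/(c·t))·dist(x',y)^(2α−d) dm(y) ≤ C·(t^((2α−d)/2) + 1). -/
import Mathlib


open MeasureTheory


private lemma summable_aux (C_v : ℝ) (d : ℕ) (c : ℝ) (hc : 0 < c) :
    Summable (fun k : ℕ => C_v * (((k:ℝ)+1)^d * Real.exp (-(k:ℝ)^2/c))) := by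
  apply Summable.mul_left
  set q := Real.exp (-(1:ℝ)/c) with hq
  have hq0 : 0 < q := Real.exp_pos _
  have hq1 : q < 1 := by
    rw [hq, Real.exp_lt_one_iff]
    exact div_neg_of_neg_of_pos (by norm_num) hc
  have hs : Summable (fun k : ℕ => ((k:ℝ))^d * q^k) :=
    summable_pow_mul_geometric_of_norm_lt_one d
      (by rwa [Real.norm_eq_abs, abs_of_pos hq0])
  have hs2 : Summable (fun k : ℕ => ((k:ℝ)+1)^d * q^(k+1)) := by
    have := hs.comp_injective Nat.succ_injective
    refine this.congr fun k => ?_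
    simp [Function.comp, Nat.succ_eq_add_one]
  have hs3 : Summable (fun k : ℕ => ((k:ℝ)+1)^d * q^k) := by
    have := hs2.mul_left q⁻¹
    refine this.congr fun k => ?_
    field_simp
    ring
  refine hs3.of_nonneg_of_le (fun k => by positivity) (fun k => ?_)
  have hexp : Real.exp (-(k:ℝ)^2/c) ≤ q^k := by
    rw [hq, ← Real.exp_nat_mul, Real.exp_le_exp]
    have h1 : (k:ℝ) * (-1/c) = -(k:ℝ)/c := by ring
    have hk2 : -((k:ℝ)^2) ≤ -(k:ℝ) := by
      rcases Nat.eq_zero_or_pos k with h | h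
      · simp [h]
      · have : (1:ℝ) ≤ (k:ℝ) := by exact_mod_cast h
        nlinarith
    rw [h1]
    have : -((k:ℝ)^2)/c ≤ -(k:ℝ)/c := by gcongr
    simpa using this
  exact mul_le_mul_of_nonneg_left hexp (by positivity)


private lemma gauss_mass {M : Type*} [MetricSpace M] [MeasurableSpace M] [BorelSpace M]
    (m : Measure M) (d : ℕ) (C_v : ℝ) (hCv : 0 ≤ C_v)
    (hvol : ∀ (x : M) (r : ℝ), 0 < r → m (Metric.ball x r) ≤ ENNReal.ofReal (C_v * r ^ d))
    (c : ℝ) (hc : 0 < c) (t : ℝ) (ht : 0 < t) (x : M) :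
    ∫⁻ y, ENNReal.ofReal (t ^ (-((d:ℝ)/2)) * Real.exp (-(dist x y ^ 2)/(c*t))) ∂m
      ≤ ENNReal.ofReal (∑' k : ℕ, C_v * (((k:ℝ)+1)^d * Real.exp (-(k:ℝ)^2/c))) := by
  set s := Real.sqrt t with hsdef
  have hs0 : 0 < s := Real.sqrt_pos.mpr ht
  have hs2 : s ^ 2 = t := Real.sq_sqrt ht.le
  have htd0 : (0:ℝ) ≤ t ^ (-((d:ℝ)/2)) := Real.rpow_nonneg ht.le _
  have hsd : (s:ℝ) ^ d = t ^ ((d:ℝ)/2) := by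
    rw [hsdef, Real.sqrt_eq_rpow, ← Real.rpow_natCast (t ^ ((1:ℝ)/2)) d, ← Real.rpow_mul ht.le]
    congr 1
    ring
  have htds : t ^ (-((d:ℝ)/2)) * s ^ d = 1 := by
    rw [hsd, ← Real.rpow_add ht]
    norm_num
  set A : ℕ → Set M := fun k => (fun y => dist x y) ⁻¹' Set.Ico ((k:ℝ)*s) (((k:ℝ)+1)*s) with hA
  have hdistmeas : Measurable (fun y => dist x y) :=
    (continuous_const.dist continuous_id).measurable
  have hAmeas : ∀ k, MeasurableSet (A k) := fun k => hdistmeas measurableSet_Ico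
  have hcover : (Set.univ : Set M) ⊆ ⋃ k, A k := by
    intro y _
    set n : ℕ := ⌊dist x y / s⌋₊ with hn
    have h1 : (n:ℝ) * s ≤ dist x y := by
      calc (n:ℝ) * s ≤ (dist x y / s) * s := by
            have h0 : (0:ℝ) ≤ dist x y := dist_nonneg
            have := Nat.floor_le (div_nonneg h0 hs0.le)
            gcongr
        _ = dist x y := div_mul_cancel₀ _ hs0.ne'
    have h2 : dist x y < ((n:ℝ) + 1) * s := by
      calc dist x y = (dist x y / s) * s := (div_mul_cancel₀ _ hs0.ne').symm
        _ < ((n:ℝ) + 1) * s :=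
            mul_lt_mul_of_pos_right (Nat.lt_floor_add_one _) hs0
    exact Set.mem_iUnion.mpr ⟨n, h1, h2⟩
  have hshell : ∀ k : ℕ,
      ∫⁻ y in A k, ENNReal.ofReal (t ^ (-((d:ℝ)/2)) * Real.exp (-(dist x y ^ 2)/(c*t))) ∂m
        ≤ ENNReal.ofReal (C_v * (((k:ℝ)+1)^d * Real.exp (-(k:ℝ)^2/c))) := by
    intro k
    have hpt : ∀ y ∈ A k,
        ENNReal.ofReal (t ^ (-((d:ℝ)/2)) * Real.exp (-(dist x y ^ 2)/(c*t)))
          ≤ ENNReal.ofReal (t ^ (-((d:ℝ)/2)) * Real.exp (-(k:ℝ)^2/c)) := by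
      intro y hy
      apply ENNReal.ofReal_le_ofReal
      apply mul_le_mul_of_nonneg_left _ htd0
      apply Real.exp_le_exp.mpr
      have hks : (k:ℝ) * s ≤ dist x y := hy.1
      have hsq : (k:ℝ)^2 * t ≤ dist x y ^ 2 := by
        have h1 : ((k:ℝ)*s)^2 ≤ dist x y ^ 2 := by
          apply pow_le_pow_left₀ (by positivity) hks
        calc (k:ℝ)^2 * t = ((k:ℝ)*s)^2 := by rw [mul_pow, hs2]
          _ ≤ _ := h1
      rw [div_le_div_iff₀ (by positivity) (by positivity), neg_mul, neg_mul, neg_le_neg_iff]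
      calc (k:ℝ)^2 * (c * t) = ((k:ℝ)^2 * t) * c := by ring
        _ ≤ dist x y ^2 * c := by gcongr
    calc ∫⁻ y in A k, ENNReal.ofReal (t ^ (-((d:ℝ)/2)) * Real.exp (-(dist x y ^ 2)/(c*t))) ∂m
        ≤ ∫⁻ _ in A k, ENNReal.ofReal (t ^ (-((d:ℝ)/2)) * Real.exp (-(k:ℝ)^2/c)) ∂m :=
          setLIntegral_mono' (hAmeas k) hpt
      _ = ENNReal.ofReal (t ^ (-((d:ℝ)/2)) * Real.exp (-(k:ℝ)^2/c)) * m (A k) :=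
          setLIntegral_const _ _
      _ ≤ ENNReal.ofReal (t ^ (-((d:ℝ)/2)) * Real.exp (-(k:ℝ)^2/c))
            * ENNReal.ofReal (C_v * (((k:ℝ)+1)*s) ^ d) := by
          apply mul_le_mul_right
          refine le_trans (measure_mono ?_) (hvol x (((k:ℝ)+1)*s) (by positivity))
          intro y hy
          exact Metric.mem_ball'.mpr hy.2
      _ = ENNReal.ofReal (C_v * (((k:ℝ)+1)^d * Real.exp (-(k:ℝ)^2/c))) := by
          rw [← ENNReal.ofReal_mul (by positivity)]
          congr 1
          rw [mul_pow]
          have : t ^ (-((d:ℝ)/2)) * Real.exp (-(k:ℝ)^2/c) * (C_v * (((k:ℝ)+1)^d * s^d))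
              = (t ^ (-((d:ℝ)/2)) * s^d) * (C_v * (((k:ℝ)+1)^d * Real.exp (-(k:ℝ)^2/c))) := by
            ring
          rw [this, htds, one_mul]
  calc ∫⁻ y, ENNReal.ofReal (t ^ (-((d:ℝ)/2)) * Real.exp (-(dist x y ^ 2)/(c*t))) ∂m
      = ∫⁻ y in Set.univ, ENNReal.ofReal (t ^ (-((d:ℝ)/2)) * Real.exp (-(dist x y ^ 2)/(c*t))) ∂m :=
        (setLIntegral_univ _).symm
    _ ≤ ∫⁻ y in ⋃ k, A k, ENNReal.ofReal (t ^ (-((d:ℝ)/2)) * Real.exp (-(dist x y ^ 2)/(c*t))) ∂m :=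
        lintegral_mono_set hcover
    _ ≤ ∑' k : ℕ, ∫⁻ y in A k, ENNReal.ofReal (t ^ (-((d:ℝ)/2)) * Real.exp (-(dist x y ^ 2)/(c*t))) ∂m :=
        lintegral_iUnion_le _ _
    _ ≤ ∑' k : ℕ, ENNReal.ofReal (C_v * (((k:ℝ)+1)^d * Real.exp (-(k:ℝ)^2/c))) :=
        ENNReal.tsum_le_tsum hshell
    _ = ENNReal.ofReal (∑' k : ℕ, C_v * (((k:ℝ)+1)^d * Real.exp (-(k:ℝ)^2/c))) :=
        (ENNReal.ofReal_tsum_of_nonneg (fun k => by positivity) (summable_aux C_v d c hc)).symm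


private lemma riesz_mass {M : Type*} [MetricSpace M] [MeasurableSpace M] [BorelSpace M]
    (m : Measure M) (d : ℕ) (C_v : ℝ) (hCv : 0 ≤ C_v)
    (hvol : ∀ (x : M) (r : ℝ), 0 < r → m (Metric.ball x r) ≤ ENNReal.ofReal (C_v * r ^ d))
    (β : ℝ) (hβ : β < 0) (hγ : 0 < (d:ℝ) + β)
    (s : ℝ) (hs0 : 0 < s) (x' : M) :
    ∫⁻ y in Metric.ball x' s, ENNReal.ofReal (dist x' y ^ β) ∂m
      ≤ ENNReal.ofReal ((C_v * (2:ℝ)⁻¹ ^ β * (1 - (2:ℝ)⁻¹ ^ ((d:ℝ)+β))⁻¹) * s ^ ((d:ℝ)+β)) := by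
  set r : ℝ := (2:ℝ)⁻¹ with hrdef
  have hr0 : 0 < r := by norm_num
  have hr1 : r < 1 := by norm_num
  set γ : ℝ := (d:ℝ) + β with hγdef
  have hrγ0 : (0:ℝ) ≤ r ^ γ := Real.rpow_nonneg hr0.le _
  have hrγ1 : r ^ γ < 1 := Real.rpow_lt_one hr0.le hr1 hγ
  have hrβ0 : (0:ℝ) ≤ r ^ β := Real.rpow_nonneg hr0.le _
  have hsγ0 : (0:ℝ) ≤ s ^ γ := Real.rpow_nonneg hs0.le _
  have hdistmeas : Measurable (fun y => dist x' y) :=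
    (continuous_const.dist continuous_id).measurable
  set S : ℕ → Set M := fun k => (fun y => dist x' y) ⁻¹' Set.Ico (s * r^(k+1)) (s * r^k) with hS
  set E : Set M := (fun y => dist x' y) ⁻¹' {0} with hE
  have hSmeas : ∀ k, MeasurableSet (S k) := fun k => hdistmeas measurableSet_Ico
  have hEmeas : MeasurableSet E := hdistmeas (measurableSet_singleton 0)
  -- covering
  have hcover : Metric.ball x' s ⊆ E ∪ ⋃ k, S k := by
    intro y hy
    have hyd : dist x' y < s := by rw [dist_comm]; exact Metric.mem_ball.mp hy
    rcases eq_or_lt_of_le (dist_nonneg (x := x') (y := y)) with h0 | h0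
    · exact Or.inl h0.symm
    · right
      have hex : ∃ k : ℕ, s * r^(k+1) ≤ dist x' y := by
        obtain ⟨n, hn⟩ := exists_pow_lt_of_lt_one (div_pos h0 hs0) hr1
        refine ⟨n, ?_⟩
        have h2 : s * r ^ n < dist x' y := by
          have := (lt_div_iff₀ hs0).mp hn
          linarith [this]
        have h3 : s * r ^ (n+1) ≤ s * r ^ n := by
          have : r ^ (n+1) ≤ r ^ n := pow_le_pow_of_le_one hr0.le hr1.le (by omega)
          gcongr
        linarith
      set k₀ := Nat.find hex with hk₀
      have hlow : s * r^(k₀+1) ≤ dist x' y := Nat.find_spec hex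
      have hhigh : dist x' y < s * r^k₀ := by
        rcases Nat.eq_zero_or_pos k₀ with hz | hz
        · rw [hz]; simpa using hyd
        · have := Nat.find_min hex (m := k₀ - 1) (by omega)
          push_neg at this
          have heq : k₀ - 1 + 1 = k₀ := by omega
          rwa [heq] at this
      exact Set.mem_iUnion.mpr ⟨k₀, hlow, hhigh⟩
  -- shell estimate
  have hshell : ∀ k : ℕ,
      ∫⁻ y in S k, ENNReal.ofReal (dist x' y ^ β) ∂m
        ≤ ENNReal.ofReal ((C_v * r ^ β * s ^ γ) * (r ^ γ) ^ k) := by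
    intro k
    have hrk1 : (0:ℝ) < s * r ^ (k+1) := by positivity
    calc ∫⁻ y in S k, ENNReal.ofReal (dist x' y ^ β) ∂m
        ≤ ∫⁻ _ in S k, ENNReal.ofReal ((s * r^(k+1)) ^ β) ∂m := by
          refine setLIntegral_mono' (hSmeas k) fun y hy => ?_
          exact ENNReal.ofReal_le_ofReal
            (Real.rpow_le_rpow_of_nonpos hrk1 hy.1 hβ.le)
      _ = ENNReal.ofReal ((s * r^(k+1)) ^ β) * m (S k) := setLIntegral_const _ _
      _ ≤ ENNReal.ofReal ((s * r^(k+1)) ^ β) * ENNReal.ofReal (C_v * (s * r^k) ^ d) := by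
          apply mul_le_mul_right
          refine le_trans (measure_mono ?_) (hvol x' (s * r^k) (by positivity))
          intro y hy
          exact Metric.mem_ball'.mpr hy.2
      _ = ENNReal.ofReal ((C_v * r ^ β * s ^ γ) * (r ^ γ) ^ k) := by
          rw [← ENNReal.ofReal_mul (Real.rpow_nonneg hrk1.le _)]
          congr 1
          have hpow : ∀ n : ℕ, ((r ^ n : ℝ)) ^ β = (r ^ β) ^ n := fun n => by
            rw [← Real.rpow_natCast r n, ← Real.rpow_mul hr0.le, mul_comm,
              Real.rpow_mul hr0.le, Real.rpow_natCast]
          have e1 : (s * r^(k+1)) ^ β = s ^ β * (r ^ β) ^ (k+1) := by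
            rw [Real.mul_rpow hs0.le (by positivity), hpow]
          have e2 : ((s * r^k : ℝ)) ^ d = s ^ (d:ℕ) * (r ^ (d:ℕ)) ^ k := by
            rw [mul_pow, pow_right_comm]
          have e3 : s ^ β * s ^ (d:ℕ) = s ^ γ := by
            rw [← Real.rpow_natCast s d, ← Real.rpow_add hs0, hγdef, add_comm]
          have e4 : r ^ β * r ^ (d:ℕ) = r ^ γ := by
            rw [← Real.rpow_natCast r d, ← Real.rpow_add hr0, hγdef, add_comm]
          rw [e1, e2, ← e3, ← e4, mul_pow, pow_succ]
          ring
  -- sum up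
  have hEzero : ∫⁻ y in E, ENNReal.ofReal (dist x' y ^ β) ∂m = 0 := by
    have : ∀ y ∈ E, ENNReal.ofReal (dist x' y ^ β) ≤ 0 := by
      intro y hy
      have h0 : dist x' y = 0 := hy
      simp [h0, Real.zero_rpow hβ.ne]
    have h := setLIntegral_mono' (f := fun y => ENNReal.ofReal (dist x' y ^ β))
      (g := fun _ => 0) (μ := m) hEmeas this
    simpa using h
  have hsummable : Summable (fun k : ℕ => (C_v * r ^ β * s ^ γ) * (r ^ γ) ^ k) :=
    (summable_geometric_of_lt_one hrγ0 hrγ1).mul_left _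
  calc ∫⁻ y in Metric.ball x' s, ENNReal.ofReal (dist x' y ^ β) ∂m
      ≤ ∫⁻ y in E ∪ ⋃ k, S k, ENNReal.ofReal (dist x' y ^ β) ∂m := lintegral_mono_set hcover
    _ ≤ ∫⁻ y in E, ENNReal.ofReal (dist x' y ^ β) ∂m
          + ∫⁻ y in ⋃ k, S k, ENNReal.ofReal (dist x' y ^ β) ∂m := lintegral_union_le _ _ _
    _ = ∫⁻ y in ⋃ k, S k, ENNReal.ofReal (dist x' y ^ β) ∂m := by rw [hEzero, zero_add]
    _ ≤ ∑' k : ℕ, ∫⁻ y in S k, ENNReal.ofReal (dist x' y ^ β) ∂m := lintegral_iUnion_le _ _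
    _ ≤ ∑' k : ℕ, ENNReal.ofReal ((C_v * r ^ β * s ^ γ) * (r ^ γ) ^ k) :=
        ENNReal.tsum_le_tsum hshell
    _ = ENNReal.ofReal (∑' k : ℕ, (C_v * r ^ β * s ^ γ) * (r ^ γ) ^ k) :=
        (ENNReal.ofReal_tsum_of_nonneg (fun k => by positivity) hsummable).symm
    _ = ENNReal.ofReal ((C_v * r ^ β * (1 - r ^ γ)⁻¹) * s ^ γ) := by
        rw [tsum_mul_left, tsum_geometric_of_lt_one hrγ0 hrγ1]
        congr 1
        ring



/-- Estimate (3.9) of the paper, metric-measure form: Gaussian kernel centered at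
`x` integrated against the Riesz-type kernel centered at a possibly different
point `x'`. -/
theorem gaussian_riesz_kernel_integral
    (d : ℕ) (hd : 1 ≤ d) {M : Type*} [MetricSpace M] [MeasurableSpace M] [BorelSpace M]
    (m : Measure M) (hfin : m Set.univ < ⊤)
    (C_v : ℝ) (hCv : 0 < C_v)
    (hvol : ∀ (x : M) (r : ℝ), 0 < r → m (Metric.ball x r) ≤ ENNReal.ofReal (C_v * r ^ d))
    (c : ℝ) (hc : 0 < c) (α : ℝ) (hα : 0 < α) (hαd : α < (d:ℝ) / 2) :
    ∃ C > 0, ∀ t > 0, ∀ x x' : M,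
      ∫⁻ y, ENNReal.ofReal (t ^ (-((d:ℝ) / 2)) * Real.exp (-(dist x y ^ 2) / (c * t)) *
          dist x' y ^ (2 * α - (d:ℝ))) ∂m
        ≤ ENNReal.ofReal (C * (t ^ ((2 * α - (d:ℝ)) / 2) + 1)) := by
  set β : ℝ := 2 * α - (d:ℝ) with hβdef
  have hβ : β < 0 := by rw [hβdef]; linarith
  have hγpos : 0 < (d:ℝ) + β := by rw [hβdef]; push_cast; linarith
  set K₁ : ℝ := ∑' k : ℕ, C_v * (((k:ℝ)+1)^d * Real.exp (-(k:ℝ)^2/c)) with hK₁def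
  have hK₁0 : 0 ≤ K₁ := tsum_nonneg (fun k => by positivity)
  have hβne : (1:ℝ) - (2:ℝ)⁻¹ ^ ((d:ℝ)+β) > 0 := by
    have : (2:ℝ)⁻¹ ^ ((d:ℝ)+β) < 1 := Real.rpow_lt_one (by norm_num) (by norm_num) hγpos
    linarith
  set K₂ : ℝ := C_v * (2:ℝ)⁻¹ ^ β * (1 - (2:ℝ)⁻¹ ^ ((d:ℝ)+β))⁻¹ with hK₂def
  have hK₂0 : 0 < K₂ := by
    apply mul_pos (mul_pos hCv (Real.rpow_pos_of_pos (by norm_num) _))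
    exact inv_pos.mpr hβne
  refine ⟨K₁ + K₂, by linarith, ?_⟩
  intro t ht x x'
  set s : ℝ := Real.sqrt t with hsdef
  have hs0 : 0 < s := Real.sqrt_pos.mpr ht
  have hsrpow : ∀ e : ℝ, s ^ e = t ^ (e/2) := by
    intro e
    rw [hsdef, Real.sqrt_eq_rpow, ← Real.rpow_mul ht.le]
    congr 1
    ring
  have htd0 : (0:ℝ) ≤ t ^ (-((d:ℝ)/2)) := Real.rpow_nonneg ht.le _
  have htβ0 : (0:ℝ) ≤ t ^ (β/2) := Real.rpow_nonneg ht.le _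
  have hdistmeas : Measurable (fun y => dist x' y) :=
    (continuous_const.dist continuous_id).measurable
  set g₁ : M → ENNReal := (Metric.ball x' s).indicator
      (fun y => ENNReal.ofReal (t ^ (-((d:ℝ)/2)) * dist x' y ^ β)) with hg₁def
  set g₂ : M → ENNReal := fun y =>
      ENNReal.ofReal (t ^ (β/2) * (t ^ (-((d:ℝ)/2)) * Real.exp (-(dist x y ^ 2)/(c*t)))) with hg₂def
  have hg₁meas : Measurable g₁ := by
    apply Measurable.indicator _ measurableSet_ball
    exact (measurable_const.mul (hdistmeas.pow_const β)).ennreal_ofReal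
  have hpt : ∀ y : M,
      ENNReal.ofReal (t ^ (-((d:ℝ)/2)) * Real.exp (-(dist x y ^ 2)/(c*t)) * dist x' y ^ β)
        ≤ g₁ y + g₂ y := by
    intro y
    have hexp1 : Real.exp (-(dist x y ^ 2)/(c*t)) ≤ 1 := by
      rw [Real.exp_le_one_iff]
      exact div_nonpos_of_nonpos_of_nonneg (neg_nonpos.mpr (sq_nonneg _)) (by positivity)
    have hexp0 : 0 ≤ Real.exp (-(dist x y ^ 2)/(c*t)) := (Real.exp_pos _).le
    by_cases hy : y ∈ Metric.ball x' s
    · rw [hg₁def, Set.indicator_of_mem hy]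
      refine le_trans (ENNReal.ofReal_le_ofReal ?_) le_self_add
      have hd0 : (0:ℝ) ≤ dist x' y ^ β := Real.rpow_nonneg dist_nonneg _
      calc t ^ (-((d:ℝ)/2)) * Real.exp (-(dist x y ^ 2)/(c*t)) * dist x' y ^ β
          ≤ t ^ (-((d:ℝ)/2)) * 1 * dist x' y ^ β := by gcongr
        _ = t ^ (-((d:ℝ)/2)) * dist x' y ^ β := by ring
    · rw [hg₁def, Set.indicator_of_notMem hy, zero_add]
      apply ENNReal.ofReal_le_ofReal
      have hsle : s ≤ dist x' y := by
        rw [dist_comm]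
        exact le_of_not_gt (fun h => hy (Metric.mem_ball.mpr h))
      have hrle : dist x' y ^ β ≤ t ^ (β/2) := by
        rw [← hsrpow β]
        exact Real.rpow_le_rpow_of_nonpos hs0 hsle hβ.le
      calc t ^ (-((d:ℝ)/2)) * Real.exp (-(dist x y ^ 2)/(c*t)) * dist x' y ^ β
          ≤ t ^ (-((d:ℝ)/2)) * Real.exp (-(dist x y ^ 2)/(c*t)) * t ^ (β/2) := by gcongr
        _ = t ^ (β/2) * (t ^ (-((d:ℝ)/2)) * Real.exp (-(dist x y ^ 2)/(c*t))) := by ring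
  have hint1 : ∫⁻ y, g₁ y ∂m ≤ ENNReal.ofReal (K₂ * t ^ (β/2)) := by
    rw [hg₁def, lintegral_indicator measurableSet_ball]
    have : ∀ y : M, ENNReal.ofReal (t ^ (-((d:ℝ)/2)) * dist x' y ^ β)
        = ENNReal.ofReal (t ^ (-((d:ℝ)/2))) * ENNReal.ofReal (dist x' y ^ β) := fun y =>
      ENNReal.ofReal_mul htd0
    simp_rw [this]
    rw [lintegral_const_mul' _ _ ENNReal.ofReal_ne_top]
    calc ENNReal.ofReal (t ^ (-((d:ℝ)/2))) * ∫⁻ y in Metric.ball x' s, ENNReal.ofReal (dist x' y ^ β) ∂m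
        ≤ ENNReal.ofReal (t ^ (-((d:ℝ)/2)))
            * ENNReal.ofReal ((C_v * (2:ℝ)⁻¹ ^ β * (1 - (2:ℝ)⁻¹ ^ ((d:ℝ)+β))⁻¹) * s ^ ((d:ℝ)+β)) :=
          mul_le_mul_right (riesz_mass m d C_v hCv.le hvol β hβ hγpos s hs0 x') _
      _ = ENNReal.ofReal (K₂ * t ^ (β/2)) := by
          rw [← ENNReal.ofReal_mul htd0]
          congr 1
          rw [hsrpow, ← hK₂def]
          have : t ^ (-((d:ℝ)/2)) * (K₂ * t ^ (((d:ℝ)+β)/2))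
              = K₂ * (t ^ (-((d:ℝ)/2)) * t ^ (((d:ℝ)+β)/2)) := by ring
          rw [this, ← Real.rpow_add ht]
          congr 2
          ring
  have hint2 : ∫⁻ y, g₂ y ∂m ≤ ENNReal.ofReal (K₁ * t ^ (β/2)) := by
    rw [hg₂def]
    simp_rw [fun y : M => ENNReal.ofReal_mul (p := t ^ (β/2))
      (q := t ^ (-((d:ℝ)/2)) * Real.exp (-(dist x y ^ 2)/(c*t))) htβ0]
    rw [lintegral_const_mul' _ _ ENNReal.ofReal_ne_top]
    calc ENNReal.ofReal (t ^ (β/2))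
          * ∫⁻ y, ENNReal.ofReal (t ^ (-((d:ℝ)/2)) * Real.exp (-(dist x y ^ 2)/(c*t))) ∂m
        ≤ ENNReal.ofReal (t ^ (β/2)) * ENNReal.ofReal K₁ :=
          mul_le_mul_right (gauss_mass m d C_v hCv.le hvol c hc t ht x) _
      _ = ENNReal.ofReal (K₁ * t ^ (β/2)) := by
          rw [← ENNReal.ofReal_mul htβ0]
          congr 1
          ring
  calc ∫⁻ y, ENNReal.ofReal (t ^ (-((d:ℝ)/2)) * Real.exp (-(dist x y ^ 2)/(c*t)) * dist x' y ^ β) ∂m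
      ≤ ∫⁻ y, (g₁ y + g₂ y) ∂m := lintegral_mono hpt
    _ = ∫⁻ y, g₁ y ∂m + ∫⁻ y, g₂ y ∂m := lintegral_add_left hg₁meas _
    _ ≤ ENNReal.ofReal (K₂ * t ^ (β/2)) + ENNReal.ofReal (K₁ * t ^ (β/2)) := add_le_add hint1 hint2
    _ = ENNReal.ofReal ((K₁ + K₂) * t ^ (β/2)) := by
        rw [← ENNReal.ofReal_add (by positivity) (by positivity)]
        congr 1
        ring
    _ ≤ ENNReal.ofReal ((K₁ + K₂) * (t ^ (β/2) + 1)) := by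
        apply ENNReal.ofReal_le_ofReal
        nlinarith [htβ0]
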